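/- Let M be a simple graphic matroid of rank r on n elements, and let (h_0,…,h_r) be the h-vector of its broken circuit complex. Then h_2 = C(n−r+1, 2) − t(M), where t(M) is the number of 3-element circuits of M and C(·,·) is a binomial coefficient. -/

import Mathlib

open Polynomial

namespace SPPaper

noncomputable section
open Classical

universe u
variable {α : Type u} {V : Type u}

/-- Deletion of a set of elements: `M − X`. -/
def del (M : Matroid α) (X : Set α) : Matroid α := M.restrict (M.E \ X)

/-- Contraction of a set of elements: `M/X = (M✶ − X)✶`. -/
def con (M : Matroid α) (X : Set α) : Matroid α := (del M.dual X).dual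

/-- The rank of a set: the (common) cardinality of maximal independent subsets. -/
def rk (M : Matroid α) (X : Set α) : ℕ :=
  sSup {n | ∃ I, I ⊆ X ∧ M.Indep I ∧ I.ncard = n}

/-- The rank of a matroid. -/
def rank (M : Matroid α) : ℕ := rk M M.E

/-- `e` is a loop of `M` if `{e}` is dependent. -/
def IsLoop (M : Matroid α) (e : α) : Prop := e ∈ M.E ∧ ¬ M.Indep {e}

/-- A matroid is loopless if it has no loops. -/
def Loopless (M : Matroid α) : Prop := ∀ e, ¬ IsLoop M e

/-- `e` is a coloop of `M` if it lies in every basis. -/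
def IsColoop (M : Matroid α) (e : α) : Prop := e ∈ M.E ∧ ∀ B, M.IsBase B → e ∈ B

/-- A circuit of a matroid: a minimal dependent set. -/
def IsCircuit (M : Matroid α) (C : Set α) : Prop := M.Dep C ∧ ∀ D, D ⊂ C → M.Indep D

/-- A matroid is simple if it has no loops and no two-element circuits. -/
def Simple (M : Matroid α) : Prop := Loopless M ∧ ∀ e f : α, ¬ IsCircuit M {e, f}

/-- `h(M;x) = t(M;x,0)` where `t` is the Tutte polynomial:
`t(M;x,y) = ∑_{A ⊆ E} (x−1)^(r(E)−r(A)) (y−1)^(|A|−r(A))`. -/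
def hPoly (M : Matroid α) [Fintype α] : Polynomial ℤ :=
  ∑ A ∈ (Set.toFinite M.E).toFinset.powerset,
    (Polynomial.X - 1) ^ (rank M - rk M (A : Set α)) *
      (-1 : Polynomial ℤ) ^ (A.card - rk M (A : Set α))

/-- The `i`-th entry of the h-vector of the broken circuit complex:
`h(M;x) = ∑_{i=0}^r h_i x^(r−i)`. -/
def hvec (M : Matroid α) [Fintype α] (i : ℕ) : ℤ :=
  if i ≤ rank M then (hPoly M).coeff (rank M - i) else 0

/-- The beta invariant `β(M) = (−1)^(r(E)) ∑_{A ⊆ E} (−1)^(|A|) r(A)`. -/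
def beta (M : Matroid α) [Fintype α] : ℤ :=
  (-1) ^ rank M *
    ∑ A ∈ (Set.toFinite M.E).toFinset.powerset, (-1 : ℤ) ^ A.card * (rk M (A : Set α) : ℤ)

/-- `P` is the direct sum of `M1` and `M2`. -/
def IsDirSumOf (P M1 M2 : Matroid α) : Prop :=
  ∃ h : Disjoint M1.E M2.E, P = Matroid.disjointSum M1 M2 h

/-- A matroid is connected if its ground set is nonempty and it is not the direct sum
of two matroids on nonempty ground sets. -/
def Connected (M : Matroid α) : Prop :=
  M.E.Nonempty ∧ ¬ ∃ M1 M2 : Matroid α, M1.E.Nonempty ∧ M2.E.Nonempty ∧ IsDirSumOf M M1 M2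

/-- `M` is the matroid on ground set `E` whose circuits are exactly the sets satisfying `𝒞`. -/
def HasCircuits (M : Matroid α) (E : Set α) (𝒞 : Set α → Prop) : Prop :=
  M.E = E ∧ ∀ C, IsCircuit M C ↔ 𝒞 C

/-- The circuits of the parallel connection of `M1` and `M2` with basepoint `e`. -/
def PConnCircuit (M1 M2 : Matroid α) (e : α) (C : Set α) : Prop :=
  IsCircuit M1 C ∨ IsCircuit M2 C ∨
    ∃ C1 C2, IsCircuit M1 C1 ∧ IsCircuit M2 C2 ∧ e ∈ C1 ∧ e ∈ C2 ∧ C = (C1 ∪ C2) \ {e}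

/-- The circuits of the series connection of `M1` and `M2` with basepoint `e`. -/
def SConnCircuit (M1 M2 : Matroid α) (e : α) (C : Set α) : Prop :=
  IsCircuit (del M1 {e}) C ∨ IsCircuit (del M2 {e}) C ∨
    ∃ C1 C2, IsCircuit M1 C1 ∧ IsCircuit M2 C2 ∧ e ∈ C1 ∧ e ∈ C2 ∧ C = C1 ∪ C2

/-- `P` is the parallel connection of `M1` and `M2` with respect to the basepoint `e`
(including the degenerate conventions when `e` is a loop or a coloop). -/
def IsParallelConn (P M1 M2 : Matroid α) (e : α) : Prop :=
  if IsLoop M1 e then IsDirSumOf P M1 (con M2 {e})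
  else if IsColoop M1 e then IsDirSumOf P (del M1 {e}) M2
  else if IsLoop M2 e then IsDirSumOf P (con M1 {e}) M2
  else if IsColoop M2 e then IsDirSumOf P M1 (del M2 {e})
  else HasCircuits P (M1.E ∪ M2.E) (PConnCircuit M1 M2 e)

/-- `S` is the series connection of `M1` and `M2` with respect to the basepoint `e`
(including the degenerate conventions when `e` is a loop or a coloop). -/
def IsSeriesConn (S M1 M2 : Matroid α) (e : α) : Prop :=
  if IsLoop M1 e then IsDirSumOf S (con M1 {e}) M2
  else if IsColoop M1 e then IsDirSumOf S M1 (del M2 {e})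
  else if IsLoop M2 e then IsDirSumOf S M1 (con M2 {e})
  else if IsColoop M2 e then IsDirSumOf S (del M1 {e}) M2
  else HasCircuits S (M1.E ∪ M2.E) (SConnCircuit M1 M2 e)

/-- `N` is a two-element circuit. -/
def TwoCircuit (N : Matroid α) : Prop :=
  ∃ e f : α, e ≠ f ∧ N.E = {e, f} ∧ IsCircuit N N.E

/-- `M` is a series extension of `N`: `M = S(N, C₂)` for a 2-circuit `C₂`. -/
def IsSeriesExtOf (M N : Matroid α) : Prop :=
  ∃ (C : Matroid α) (e : α), TwoCircuit C ∧ N.E ∩ C.E = {e} ∧ IsSeriesConn M N C e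

/-- `M` is a parallel extension of `N`: `M = P(N, C₂)` for a 2-circuit `C₂`. -/
def IsParallelExtOf (M N : Matroid α) : Prop :=
  ∃ (C : Matroid α) (e : α), TwoCircuit C ∧ N.E ∩ C.E = {e} ∧ IsParallelConn M N C e

/-- A series-parallel network: a matroid obtainable from a coloop by a sequence of
series and parallel extensions. -/
inductive IsSPNetwork : Matroid α → Prop
  | coloop (M : Matroid α) (e : α) : M.E = {e} → IsColoop M e → IsSPNetwork M
  | series (M N : Matroid α) : IsSPNetwork N → IsSeriesExtOf M N → IsSPNetwork M
  | parallel (M N : Matroid α) : IsSPNetwork N → IsParallelExtOf M N → IsSPNetwork M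

/-- `M` is parallel irreducible at `f`: either `M` is trivial or `M` is not the parallel
connection, with basepoint `f`, of two matroids each having at least two elements. -/
def ParallelIrreducibleAt (M : Matroid α) (f : α) : Prop :=
  M.E.Subsingleton ∨
    ¬ ∃ M1 M2 : Matroid α, M1.E ∩ M2.E = {f} ∧ M1.E.Nontrivial ∧ M2.E.Nontrivial ∧
        IsParallelConn M M1 M2 f

/-- `M` is parallel irreducible. -/
def ParallelIrreducible (M : Matroid α) : Prop := ∀ f ∈ M.E, ParallelIrreducibleAt M f

/-- `M` is the iterated parallel connection of the list `l` of matroids. -/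
inductive IsIterPConn : Matroid α → List (Matroid α) → Prop
  | base (M : Matroid α) : IsIterPConn M [M]
  | step (P M N : Matroid α) (l : List (Matroid α)) (e : α) :
      IsIterPConn P l → P.E ∩ N.E = {e} → IsParallelConn M P N e →
      IsIterPConn M (l ++ [N])

/-- `M` is the cycle matroid of the graph `G` (on the ground set `G.edgeSet`):
a set of edges is independent iff it contains no cycle. -/
def IsCycleMatroid (M : Matroid (Sym2 V)) (G : SimpleGraph V) : Prop :=
  M.E = G.edgeSet ∧ ∀ X ⊆ M.E, (M.Indep X ↔ (SimpleGraph.fromEdgeSet X).IsAcyclic)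

/-- `M` is (isomorphic to) the cycle matroid of the graph `G`. -/
def IsCycleMatroidOf (M : Matroid α) {W : Type} (G : SimpleGraph W) : Prop :=
  ∃ φ : α → Sym2 W, Set.InjOn φ M.E ∧ φ '' M.E = G.edgeSet ∧
    ∀ X ⊆ M.E, (M.Indep X ↔ (SimpleGraph.fromEdgeSet (φ '' X)).IsAcyclic)

/-- A matroid is graphic if it is isomorphic to the cycle matroid of a graph. -/
def IsGraphic (M : Matroid α) : Prop := ∃ (W : Type) (G : SimpleGraph W), IsCycleMatroidOf M G

/-- A nonempty set of elements, each lying in some circuit, such that every circuit of `M`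
containing one of them contains all of them. -/
def SeriesSet (M : Matroid α) (X : Set α) : Prop :=
  X ⊆ M.E ∧ X.Nonempty ∧ (∀ e ∈ X, ∃ C, IsCircuit M C ∧ e ∈ C) ∧
    ∀ C, IsCircuit M C → X ⊆ C ∨ Disjoint X C

/-- A series class: a maximal `SeriesSet`. -/
def SeriesClass (M : Matroid α) (X : Set α) : Prop :=
  SeriesSet M X ∧ ∀ Y, SeriesSet M Y → X ⊆ Y → X = Y

/-- A removable line of a block `G` (with cycle matroid `M`): a line (a nontrivial path
all of whose internal vertices have degree 2) whose removal (edges together with the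
internal vertices) leaves a block. -/
def IsRemovableLine (G : SimpleGraph V) (M : Matroid (Sym2 V)) (X : Set (Sym2 V)) : Prop :=
  ∃ (u v : V) (p : G.Walk u v), p.IsPath ∧ 0 < p.length ∧ X = {e | e ∈ p.edges} ∧
    (∀ w ∈ p.support, w ≠ u → w ≠ v → (G.neighborSet w).ncard = 2) ∧
    ((G.deleteEdges X).induce {w : V | ¬ (w ∈ p.support ∧ w ≠ u ∧ w ≠ v)}).Connected ∧
    Connected (del M X)

/-- One subdivision step: replace an edge `uv` by a path `u-w-v` through a new vertex `w`. -/
def SubdivStep (G G' : SimpleGraph V) : Prop :=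
  ∃ u v w : V, G.Adj u v ∧ w ∉ G.support ∧ w ≠ u ∧ w ≠ v ∧
    G' = SimpleGraph.fromEdgeSet ((G.edgeSet \ {s(u, v)}) ∪ {s(u, w), s(w, v)})

/-- `H` is a subdivision of the complete graph `K₄`. -/
def IsSubdivOfK4 (H : SimpleGraph V) : Prop :=
  ∃ f : Fin 4 ↪ V,
    Relation.ReflTransGen SubdivStep
      (SimpleGraph.fromEdgeSet {s | ∃ i j : Fin 4, i ≠ j ∧ s = s(f i, f j)}) H


/-! ### Auxiliary lemmas for Statement 13 -/

section Aux13

lemma rk_bddAbove (M : Matroid α) [Fintype α] (X : Set α) :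
    BddAbove {n | ∃ I, I ⊆ X ∧ M.Indep I ∧ I.ncard = n} := by
  refine ⟨Fintype.card α, ?_⟩
  rintro nn ⟨I, -, -, rfl⟩
  have h := Set.ncard_le_ncard (Set.subset_univ I) Set.finite_univ
  rwa [Set.ncard_univ, Nat.card_eq_fintype_card] at h

lemma rk_exists (M : Matroid α) [Fintype α] (X : Set α) :
    ∃ I, I ⊆ X ∧ M.Indep I ∧ I.ncard = rk M X := by
  have h0 : 0 ∈ {n | ∃ I, I ⊆ X ∧ M.Indep I ∧ I.ncard = n} :=
    ⟨∅, Set.empty_subset _, M.empty_indep, by simp⟩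
  exact Nat.sSup_mem ⟨0, h0⟩ (rk_bddAbove M X)

lemma le_rk {M : Matroid α} [Fintype α] {X I : Set α} (hIX : I ⊆ X) (hI : M.Indep I) :
    I.ncard ≤ rk M X :=
  le_csSup (rk_bddAbove M X) ⟨I, hIX, hI, rfl⟩

lemma rk_mono (M : Matroid α) [Fintype α] {X Y : Set α} (h : X ⊆ Y) : rk M X ≤ rk M Y := by
  obtain ⟨I, hIX, hI, hcard⟩ := rk_exists M X
  exact hcard ▸ le_rk (hIX.trans h) hI

lemma rk_le_ncard (M : Matroid α) [Fintype α] (X : Set α) : rk M X ≤ X.ncard := by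
  obtain ⟨I, hIX, hI, hcard⟩ := rk_exists M X
  exact hcard ▸ Set.ncard_le_ncard hIX (Set.toFinite X)

lemma rk_indep {M : Matroid α} [Fintype α] {X : Set α} (h : M.Indep X) : rk M X = X.ncard :=
  le_antisymm (rk_le_ncard M X) (le_rk subset_rfl h)

lemma rk_empty (M : Matroid α) [Fintype α] : rk M (∅ : Set α) = 0 := by
  simpa using rk_indep M.empty_indep

lemma rk_le_rank (M : Matroid α) [Fintype α] {X : Set α} (h : X ⊆ M.E) : rk M X ≤ rank M :=
  rk_mono M h

lemma Simple.indep_singleton {M : Matroid α} (hs : Simple M) {e : α} (he : e ∈ M.E) :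
    M.Indep {e} := by
  by_contra h; exact hs.1 e ⟨he, h⟩

lemma Simple.indep_pair {M : Matroid α} (hs : Simple M) {e f : α}
    (he : e ∈ M.E) (hf : f ∈ M.E) : M.Indep {e, f} := by
  by_cases hef : e = f
  · subst hef; simpa using hs.indep_singleton he
  by_contra h
  refine hs.2 e f ⟨Matroid.dep_iff.mpr ⟨h, Set.insert_subset he
    (Set.singleton_subset_iff.mpr hf)⟩, ?_⟩
  intro D hD
  have hDs : D ⊆ ({e, f} : Set α) := hD.subset
  have hne : ¬ (({e, f} : Set α) ⊆ D) := hD.not_subset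
  by_cases heD : e ∈ D
  · have hfD : f ∉ D := fun hfD =>
      hne (Set.insert_subset heD (Set.singleton_subset_iff.mpr hfD))
    refine (hs.indep_singleton he).subset fun x hx => ?_
    rcases hDs hx with rfl | hx'
    · rfl
    · exact absurd hx (by rw [Set.mem_singleton_iff] at hx'; subst hx'; exact hfD)
  · refine (hs.indep_singleton hf).subset fun x hx => ?_
    rcases hDs hx with rfl | hx'
    · exact absurd hx heD
    · exact hx'

lemma Simple.indep_small {M : Matroid α} [Fintype α] (hs : Simple M) {D : Set α}
    (hD : D ⊆ M.E) (h2 : D.ncard ≤ 2) : M.Indep D := by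
  have h012 : D.ncard = 0 ∨ D.ncard = 1 ∨ D.ncard = 2 := by omega
  rcases h012 with h | h | h
  · rw [(Set.ncard_eq_zero (Set.toFinite D)).mp h]; exact M.empty_indep
  · obtain ⟨e, rfl⟩ := Set.ncard_eq_one.mp h
    exact hs.indep_singleton (hD rfl)
  · obtain ⟨e, f, hef, rfl⟩ := Set.ncard_eq_two.mp h
    exact hs.indep_pair (hD (by simp)) (hD (by simp))

lemma Simple.one_le_rk {M : Matroid α} [Fintype α] (hs : Simple M) {X : Set α}
    (hX : X ⊆ M.E) (hne : X.Nonempty) : 1 ≤ rk M X := by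
  obtain ⟨e, he⟩ := hne
  have := le_rk (Set.singleton_subset_iff.mpr he) (hs.indep_singleton (hX he))
  simpa using this

lemma Simple.two_le_rk {M : Matroid α} [Fintype α] (hs : Simple M) {X : Set α}
    (hX : X ⊆ M.E) {e f : α} (he : e ∈ X) (hf : f ∈ X) (hef : e ≠ f) : 2 ≤ rk M X := by
  have := le_rk (Set.insert_subset he (Set.singleton_subset_iff.mpr hf))
    (hs.indep_pair (hX he) (hX hf))
  simpa [Set.ncard_pair hef] using this

lemma Simple.circuit_of {M : Matroid α} [Fintype α] (hs : Simple M) {A : Set α}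
    (hA : A ⊆ M.E) (h3 : A.ncard = 3) (h2 : rk M A = 2) : IsCircuit M A := by
  have hni : ¬ M.Indep A := fun h => by rw [rk_indep h, h3] at h2; omega
  refine ⟨Matroid.dep_iff.mpr ⟨hni, hA⟩, fun D hD => ?_⟩
  have hlt := Set.ncard_lt_ncard hD (Set.toFinite A)
  exact hs.indep_small (hD.subset.trans hA) (by omega)

lemma Simple.rk_of_circuit {M : Matroid α} [Fintype α] (hs : Simple M) {A : Set α}
    (hC : IsCircuit M A) (h3 : A.ncard = 3) : rk M A = 2 := by
  have hA : A ⊆ M.E := hC.1.subset_ground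
  have h2 : 2 ≤ rk M A := by
    obtain ⟨x, y, z, hxy, hxz, hyz, rfl⟩ := Set.ncard_eq_three.mp h3
    exact hs.two_le_rk hA (by simp) (by simp) hxy
  have hle : rk M A ≤ 3 := h3 ▸ rk_le_ncard M A
  have hne : rk M A ≠ 3 := by
    intro h
    obtain ⟨I, hIA, hind, hcard⟩ := rk_exists M A
    have : I = A := Set.eq_of_subset_of_ncard_le hIA (by omega) (Set.toFinite A)
    exact hC.1.not_indep (this ▸ hind)
  omega

/-- The mod-2 vertex-incidence vector of an edge. -/
def edgeVec {W : Type} : Sym2 W → (W →₀ ZMod 2) :=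
  Sym2.lift ⟨fun u v => Finsupp.single u 1 + Finsupp.single v 1, fun u v => add_comm _ _⟩

lemma edgeVec_mk {W : Type} (u v : W) :
    edgeVec s(u, v) = Finsupp.single u 1 + Finsupp.single v 1 := rfl

lemma single_double {W : Type} (u : W) :
    Finsupp.single u (1 : ZMod 2) + Finsupp.single u 1 = 0 := by
  rw [← Finsupp.single_add]
  have h : (1 + 1 : ZMod 2) = 0 := by decide
  rw [h, Finsupp.single_zero]

lemma walk_sum {W : Type} {G : SimpleGraph W} : ∀ {u v : W} (p : G.Walk u v),
    (p.edges.map edgeVec).sum = Finsupp.single u 1 + Finsupp.single v 1 := by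
  intro u v p
  induction p with
  | nil => simpa using (single_double _).symm
  | @cons u w v h p ih =>
    rw [SimpleGraph.Walk.edges_cons, List.map_cons, List.sum_cons, ih, edgeVec_mk]
    have hh : (Finsupp.single u (1 : ZMod 2) + Finsupp.single w 1 +
        (Finsupp.single w 1 + Finsupp.single v 1)) =
        (Finsupp.single w 1 + Finsupp.single w 1) +
          (Finsupp.single u 1 + Finsupp.single v 1) := by abel
    rw [hh, single_double, zero_add]

lemma sym2_rep {W : Type} (e : Sym2 W) : ∃ x y, e = s(x, y) :=
  e.inductionOn fun x y => ⟨x, y, rfl⟩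

lemma triangle_rel {W : Type} {e1 e2 e3 : Sym2 W} (h12 : e1 ≠ e2) (h13 : e1 ≠ e3)
    (h23 : e2 ≠ e3) (hnc : ¬ (SimpleGraph.fromEdgeSet {e1, e2, e3}).IsAcyclic) :
    edgeVec e1 + edgeVec e2 + edgeVec e3 = 0 := by
  rw [SimpleGraph.IsAcyclic] at hnc
  push_neg at hnc
  obtain ⟨v, p, hp⟩ := hnc
  have hnd : p.edges.Nodup := hp.isCircuit.isTrail.edges_nodup
  have hsub : ∀ e ∈ p.edges, e ∈ ({e1, e2, e3} : Set (Sym2 W)) := fun e he =>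
    ((SimpleGraph.edgeSet_fromEdgeSet _) ▸ p.edges_subset_edgeSet he).1
  have hset : p.edges.toFinset = ({e1, e2, e3} : Finset (Sym2 W)) := by
    apply Finset.eq_of_subset_of_card_le
    · intro e he
      have := hsub e (List.mem_toFinset.mp he)
      simpa using this
    · have hc3 : ({e1, e2, e3} : Finset (Sym2 W)).card = 3 := by
        rw [Finset.card_insert_of_notMem (by simp [h12, h13]),
          Finset.card_insert_of_notMem (by simp [h23]), Finset.card_singleton]
      have hlen : p.edges.toFinset.card = p.length := by
        rw [List.toFinset_card_of_nodup hnd, SimpleGraph.Walk.length_edges]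
      have := hp.three_le_length
      omega
  have h0 : (p.edges.map edgeVec).sum = 0 := by rw [walk_sum, single_double]
  rw [← List.sum_toFinset _ hnd, hset, Finset.sum_insert (by simp [h12, h13]),
    Finset.sum_insert (by simp [h23]), Finset.sum_singleton, ← add_assoc] at h0
  exact h0

lemma edgeVec_eval {W : Type} {a b : W} (hab : a ≠ b) (w : W) :
    ((Finsupp.single a (1 : ZMod 2) + Finsupp.single b (1 : ZMod 2) : W →₀ ZMod 2) w = 1 ↔
      (w = a ∨ w = b)) := by
  simp only [Finsupp.add_apply, Finsupp.single_apply]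
  by_cases h1 : a = w <;> by_cases h2 : b = w
  · exact absurd (h1.trans h2.symm) hab
  · rw [if_pos h1, if_neg h2, add_zero]
    simp [h1]
  · rw [if_neg h1, if_pos h2, zero_add]
    simp [h2]
  · rw [if_neg h1, if_neg h2, add_zero]
    constructor
    · intro h; exact absurd h (by decide)
    · rintro (rfl | rfl)
      · exact absurd rfl h1
      · exact absurd rfl h2

lemma edgeVec_inj {W : Type} {e f : Sym2 W} (he : ¬ e.IsDiag) (hf : ¬ f.IsDiag)
    (h : edgeVec e = edgeVec f) : e = f := by
  obtain ⟨u, v, rfl⟩ := sym2_rep e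
  obtain ⟨x, y, rfl⟩ := sym2_rep f
  rw [Sym2.mk_isDiag_iff] at he hf
  rw [edgeVec_mk, edgeVec_mk] at h
  have key : ∀ w, (Finsupp.single u (1 : ZMod 2) + Finsupp.single v (1 : ZMod 2) :
        W →₀ ZMod 2) w =
      (Finsupp.single x (1 : ZMod 2) + Finsupp.single y (1 : ZMod 2) : W →₀ ZMod 2) w :=
    fun w => by rw [h]
  have hu : u = x ∨ u = y := by
    refine (edgeVec_eval hf u).mp ?_
    rw [← key u]; exact (edgeVec_eval he u).mpr (Or.inl rfl)
  have hv : v = x ∨ v = y := by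
    refine (edgeVec_eval hf v).mp ?_
    rw [← key v]; exact (edgeVec_eval he v).mpr (Or.inr rfl)
  rcases hu with rfl | rfl
  · rcases hv with rfl | rfl
    · exact absurd rfl he
    · rfl
  · rcases hv with rfl | rfl
    · exact Sym2.eq_swap
    · exact absurd rfl he

lemma no_four {M : Matroid α} [Fintype α] (hs : Simple M) (hg : IsGraphic M) {A : Set α}
    (hA : A ⊆ M.E) (h2 : rk M A = 2) {a b c d : α}
    (ha : a ∈ A) (hb : b ∈ A) (hc : c ∈ A) (hd : d ∈ A)
    (hab : a ≠ b) (hac : a ≠ c) (had : a ≠ d) (hbc : b ≠ c) (hbd : b ≠ d) (hcd : c ≠ d) :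
    False := by
  obtain ⟨W, G, φ, hinj, himg, hInd⟩ := hg
  have tri : ∀ x y z : α, x ∈ A → y ∈ A → z ∈ A → x ≠ y → x ≠ z → y ≠ z →
      edgeVec (φ x) + edgeVec (φ y) + edgeVec (φ z) = 0 := by
    intro x y z hx hy hz hxy hxz hyz
    have hsubA : ({x, y, z} : Set α) ⊆ A :=
      Set.insert_subset hx (Set.insert_subset hy (Set.singleton_subset_iff.mpr hz))
    have hsubE : ({x, y, z} : Set α) ⊆ M.E := hsubA.trans hA
    have hdep : ¬ M.Indep {x, y, z} := by
      intro h
      have h3 : ({x, y, z} : Set α).ncard = 3 :=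
        Set.ncard_eq_three.mpr ⟨x, y, z, hxy, hxz, hyz, rfl⟩
      have := le_rk hsubA h
      rw [h3, h2] at this; omega
    have hnc : ¬ (SimpleGraph.fromEdgeSet (φ '' {x, y, z})).IsAcyclic := fun hac2 =>
      hdep ((hInd _ hsubE).mpr hac2)
    have himg3 : φ '' ({x, y, z} : Set α) = {φ x, φ y, φ z} := by
      simp [Set.image_insert_eq]
    rw [himg3] at hnc
    have hne' : ∀ p q : α, p ∈ M.E → q ∈ M.E → p ≠ q → φ p ≠ φ q := fun p q hp hq hpq h' =>
      hpq (hinj hp hq h')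
    exact triangle_rel (hne' x y (hsubE (by simp)) (hsubE (by simp)) hxy)
      (hne' x z (hsubE (by simp)) (hsubE (by simp)) hxz)
      (hne' y z (hsubE (by simp)) (hsubE (by simp)) hyz) hnc
  have h1 := tri a b c ha hb hc hab hac hbc
  have h2' := tri a b d ha hb hd hab had hbd
  have hphicd : edgeVec (φ c) = edgeVec (φ d) :=
    add_left_cancel (h1.trans h2'.symm)
  have hcE := hA hc
  have hdE := hA hd
  have hcdiag : ¬ (φ c).IsDiag :=
    G.not_isDiag_of_mem_edgeSet (himg ▸ Set.mem_image_of_mem φ hcE)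
  have hddiag : ¬ (φ d).IsDiag :=
    G.not_isDiag_of_mem_edgeSet (himg ▸ Set.mem_image_of_mem φ hdE)
  exact hcd (hinj hcE hdE (edgeVec_inj hcdiag hddiag hphicd))

lemma Simple.card_le_three {M : Matroid α} [Fintype α] (hs : Simple M) (hg : IsGraphic M)
    {A : Finset α} (hA : ↑A ⊆ M.E) (h2 : rk M ↑A = 2) : A.card ≤ 3 := by
  by_contra h
  push_neg at h
  obtain ⟨B, hBA, hB⟩ := Finset.exists_subset_card_eq (show 4 ≤ A.card by omega)
  obtain ⟨a, haB⟩ := Finset.card_pos.mp (show 0 < B.card by omega)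
  have h3 : (B.erase a).card = 3 := by rw [Finset.card_erase_of_mem haB, hB]
  obtain ⟨b, c, d, hbc, hbd, hcd, hBe⟩ := Finset.card_eq_three.mp h3
  have hbB : b ∈ B.erase a := by rw [hBe]; simp
  have hcB : c ∈ B.erase a := by rw [hBe]; simp
  have hdB : d ∈ B.erase a := by rw [hBe]; simp
  have hmem : ∀ x ∈ B, x ∈ (↑A : Set α) := fun x hx => Finset.mem_coe.mpr (hBA hx)
  exact no_four hs hg hA h2 (hmem a haB) (hmem b ((Finset.mem_erase.mp hbB).2))
    (hmem c ((Finset.mem_erase.mp hcB).2)) (hmem d ((Finset.mem_erase.mp hdB).2))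
    (Ne.symm (Finset.mem_erase.mp hbB).1) (Ne.symm (Finset.mem_erase.mp hcB).1)
    (Ne.symm (Finset.mem_erase.mp hdB).1) hbc hbd hcd

lemma neg_one_pow_congr {a b : ℕ} (h : a % 2 = b % 2) : ((-1 : ℤ)) ^ a = (-1) ^ b := by
  rcases Nat.even_or_odd a with ha | ha
  · rw [ha.neg_one_pow, Even.neg_one_pow (Nat.even_iff.mpr
      (by rw [← h]; exact Nat.even_iff.mp ha))]
  · rw [ha.neg_one_pow, Odd.neg_one_pow (Nat.odd_iff.mpr
      (by rw [← h]; exact Nat.odd_iff.mp ha))]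

lemma choose_two_succ (m : ℕ) : (m + 1).choose 2 = m.choose 2 + m := by
  rw [Nat.choose_succ_succ, Nat.choose_one_right]
  show m + m.choose 2 = m.choose 2 + m
  omega

lemma choose_two_add (a : ℕ) : ∀ b : ℕ, (a + b).choose 2 = a.choose 2 + b.choose 2 + a * b := by
  intro b
  induction b with
  | zero => simp
  | succ b ih =>
    have h1 : a + (b + 1) = (a + b) + 1 := by omega
    rw [h1, choose_two_succ, ih, choose_two_succ, Nat.mul_add, Nat.mul_one]
    generalize a.choose 2 = x
    generalize b.choose 2 = y
    generalize a * b = z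
    omega

lemma two_mul_choose_two (a : ℕ) : 2 * a.choose 2 = a * (a - 1) := by
  induction a with
  | zero => simp
  | succ a ih =>
    rw [choose_two_succ, Nat.mul_add, ih]
    rcases a with _ | k
    · simp
    · simp only [Nat.add_sub_cancel]
      ring

end Aux13

/-- Brylawski: for a simple graphic matroid of rank `r` on `n` elements,
`h_2 = C(n−r+1, 2) − t(M)` where `t(M)` is the number of 3-circuits. -/
theorem stmt13 [Fintype α] (M : Matroid α) (hs : Simple M) (hg : IsGraphic M)
    (n r : ℕ) (hn : M.E.ncard = n) (hr : rank M = r) (hr2 : 2 ≤ r) :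
    hvec M 2 =
      ((n - r + 1).choose 2 : ℤ) - ({C : Set α | IsCircuit M C ∧ C.ncard = 3}.ncard : ℤ) := by
  classical
  set E' : Finset α := (Set.toFinite M.E).toFinset with hE'
  set P : Finset (Finset α) := E'.powerset with hPdef
  have hEcoe : (↑E' : Set α) = M.E := Set.Finite.coe_toFinset _
  have hmemP : ∀ {A : Finset α}, A ∈ P → (↑A : Set α) ⊆ M.E := by
    intro A hA
    rw [← hEcoe]
    exact_mod_cast Finset.mem_powerset.mp hA
  have hn' : E'.card = n := by rw [← hn, Set.ncard_eq_toFinset_card]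
  have hrle : r ≤ n := by
    rw [← hr, ← hn]
    exact rk_le_ncard M M.E
  set g : Finset α → ℤ := fun A => (-1 : ℤ) ^ A.card * ((r - rk M ↑A).choose (r - 2) : ℤ)
    with hgdef
  -- rank bounds for members of the powerset
  have hrkr : ∀ {A : Finset α}, A ∈ P → rk M ↑A ≤ r := by
    intro A hA
    rw [← hr]
    exact rk_le_rank M (hmemP hA)
  have hrkcard : ∀ (A : Finset α), rk M ↑A ≤ A.card := fun A => by
    simpa [Set.ncard_coe_finset] using rk_le_ncard M (↑A : Set α)
  -- Step 1: coefficient extraction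
  have hco : hvec M 2 = ∑ A ∈ P, g A := by
    simp only [hvec, hPoly]
    rw [if_pos (show 2 ≤ rank M by rw [hr]; exact hr2), hr, Polynomial.finset_sum_coeff]
    refine Finset.sum_congr rfl fun A hA => ?_
    have hrkle := hrkr hA
    have hrkc := hrkcard A
    have hCk : ((-1 : Polynomial ℤ)) ^ (A.card - rk M ↑A) =
        Polynomial.C ((-1 : ℤ) ^ (A.card - rk M ↑A)) := by
      rw [map_pow, map_neg, map_one]
    have hX : (Polynomial.X - 1 : Polynomial ℤ) = Polynomial.X + Polynomial.C (-1) := by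
      rw [map_neg, map_one]; ring
    rw [hCk, Polynomial.coeff_mul_C, hX, Polynomial.coeff_X_add_C_pow]
    by_cases hle : rk M ↑A ≤ 2
    · have hpar : (-1 : ℤ) ^ ((r - rk M ↑A) - (r - 2)) * (-1 : ℤ) ^ (A.card - rk M ↑A) =
          (-1 : ℤ) ^ A.card := by
        rw [← pow_add]
        exact neg_one_pow_congr (by omega)
      simp only [hgdef]
      rw [mul_right_comm, hpar]
    · have hch : (r - rk M ↑A).choose (r - 2) = 0 := Nat.choose_eq_zero_of_lt (by omega)
      simp only [hgdef]
      simp [hch]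
  -- Step 2: split the sum by rank
  have hzero3 : ∀ A ∈ P, 3 ≤ rk M ↑A → g A = 0 := by
    intro A hA h3
    have := hrkr hA
    simp only [hgdef]
    simp [Nat.choose_eq_zero_of_lt (show r - rk M ↑A < r - 2 by omega)]
  have hsplit : ∑ A ∈ P, g A =
      (∑ A ∈ P.filter (fun A : Finset α => rk M ↑A = 0), g A) +
        (∑ A ∈ P.filter (fun A : Finset α => rk M ↑A = 1), g A) +
          (∑ A ∈ P.filter (fun A : Finset α => rk M ↑A = 2), g A) := by
    rw [Finset.sum_filter, Finset.sum_filter, Finset.sum_filter, ← Finset.sum_add_distrib,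
      ← Finset.sum_add_distrib]
    refine Finset.sum_congr rfl fun A hA => ?_
    by_cases h0 : rk M ↑A = 0
    · simp [h0]
    · by_cases h1 : rk M ↑A = 1
      · simp [h1]
      · by_cases h2 : rk M ↑A = 2
        · simp [h2]
        · rw [hzero3 A hA (by omega)]
          simp [h0, h1, h2]
  -- rank-0 part
  have hf0 : P.filter (fun A : Finset α => rk M ↑A = 0) = {∅} := by
    ext A
    simp only [Finset.mem_filter, Finset.mem_singleton]
    constructor
    · rintro ⟨hAP, h0⟩
      by_contra hne
      have hA : (↑A : Set α).Nonempty := by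
        obtain ⟨e, he⟩ := Finset.nonempty_iff_ne_empty.mpr hne
        exact ⟨e, Finset.mem_coe.mpr he⟩
      have := hs.one_le_rk (hmemP hAP) hA
      omega
    · rintro rfl
      exact ⟨Finset.empty_mem_powerset E', by simp [rk_empty]⟩
  have hS0 : ∑ A ∈ P.filter (fun A : Finset α => rk M ↑A = 0), g A = (r.choose 2 : ℤ) := by
    rw [hf0, Finset.sum_singleton, hgdef]
    simp [rk_empty, Nat.choose_symm hr2]
  -- rank-1 part
  have hf1 : P.filter (fun A : Finset α => rk M ↑A = 1) = E'.image (fun e => {e}) := by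
    ext A
    simp only [Finset.mem_filter, Finset.mem_image]
    constructor
    · rintro ⟨hAP, h1⟩
      have hsub := hmemP hAP
      have hAne : A.Nonempty := by
        rw [Finset.nonempty_iff_ne_empty]
        rintro rfl
        rw [show ((↑(∅ : Finset α)) : Set α) = ∅ by simp, rk_empty] at h1
        omega
      obtain ⟨e, he⟩ := hAne
      refine ⟨e, ?_, ?_⟩
      · rw [hE', Set.Finite.mem_toFinset]
        exact hsub (Finset.mem_coe.mpr he)
      · symm
        rw [Finset.eq_singleton_iff_unique_mem]
        refine ⟨he, fun f hf => ?_⟩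
        by_contra hfe
        have := hs.two_le_rk hsub (Finset.mem_coe.mpr hf) (Finset.mem_coe.mpr he) hfe
        omega
    · rintro ⟨e, heE', rfl⟩
      have heE : e ∈ M.E := by rwa [hE', Set.Finite.mem_toFinset] at heE'
      refine ⟨Finset.mem_powerset.mpr (Finset.singleton_subset_iff.mpr heE'), ?_⟩
      rw [Finset.coe_singleton, rk_indep (hs.indep_singleton heE), Set.ncard_singleton]
  have hS1 : ∑ A ∈ P.filter (fun A : Finset α => rk M ↑A = 1), g A = -((n : ℤ) * ((r - 1 : ℕ) : ℤ)) := by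
    rw [hf1, Finset.sum_image (fun a _ b _ h => Finset.singleton_injective h)]
    have hterm : ∀ e ∈ E', g {e} = -(((r - 1 : ℕ) : ℤ)) := by
      intro e he
      have heE : e ∈ M.E := by rwa [hE', Set.Finite.mem_toFinset] at he
      simp only [hgdef]
      simp only [Finset.card_singleton, Finset.coe_singleton,
        rk_indep (hs.indep_singleton heE), Set.ncard_singleton]
      have h21 : r - 2 = (r - 1) - 1 := by omega
      rw [h21, Nat.choose_symm (show 1 ≤ r - 1 by omega), Nat.choose_one_right]
      ring
    rw [Finset.sum_congr rfl hterm, Finset.sum_const, hn']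
    simp [mul_comm]
  -- rank-2 part : split by cardinality
  have hcard23 : ∀ A ∈ P.filter (fun A : Finset α => rk M ↑A = 2), A.card = 2 ∨ A.card = 3 := by
    intro A hA
    rw [Finset.mem_filter] at hA
    have hub : A.card ≤ 3 := hs.card_le_three hg (hmemP hA.1) hA.2
    have hlb := hrkcard A
    rw [hA.2] at hlb
    omega
  have hf2split : ∑ A ∈ P.filter (fun A : Finset α => rk M ↑A = 2), g A =
      (∑ A ∈ P.filter (fun A : Finset α => rk M ↑A = 2 ∧ A.card = 2), g A) +
        (∑ A ∈ P.filter (fun A : Finset α => rk M ↑A = 2 ∧ A.card = 3), g A) := by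
    have hA2 : ∀ A ∈ P.filter (fun A : Finset α => rk M ↑A = 2),
        g A = (if A.card = 2 then g A else 0) + (if A.card = 3 then g A else 0) := by
      intro A hA
      rcases hcard23 A hA with h | h <;> simp [h]
    rw [Finset.sum_congr rfl hA2, Finset.sum_add_distrib, ← Finset.sum_filter,
      ← Finset.sum_filter, Finset.filter_filter, Finset.filter_filter]
  have hf22 : P.filter (fun A : Finset α => rk M ↑A = 2 ∧ A.card = 2) =
      P.filter (fun A => A.card = 2) := by
    ext A
    simp only [Finset.mem_filter]
    constructor
    · rintro ⟨h1, h2⟩; exact ⟨h1, h2.2⟩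
    · rintro ⟨h1, h2⟩
      refine ⟨h1, ?_, h2⟩
      have hsub := hmemP h1
      obtain ⟨e, f, hef, rfl⟩ := Finset.card_eq_two.mp h2
      have he : e ∈ M.E := hsub (by simp)
      have hf : f ∈ M.E := hsub (by simp)
      rw [show ((↑({e, f} : Finset α)) : Set α) = {e, f} by simp,
        rk_indep (hs.indep_pair he hf), Set.ncard_pair hef]
  have hS22 : ∑ A ∈ P.filter (fun A : Finset α => rk M ↑A = 2 ∧ A.card = 2), g A = (n.choose 2 : ℤ) := by
    have hterm : ∀ A ∈ P.filter (fun A : Finset α => rk M ↑A = 2 ∧ A.card = 2), g A = 1 := by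
      intro A hA
      rw [Finset.mem_filter] at hA
      simp only [hgdef]
      simp [hA.2.1, hA.2.2]
    rw [Finset.sum_congr rfl hterm, Finset.sum_const, hf22, ← Finset.powersetCard_eq_filter,
      Finset.card_powersetCard, hn']
    simp
  -- the 3-element sets of rank 2 are exactly the 3-circuits
  have hf23card : (P.filter (fun A : Finset α => rk M ↑A = 2 ∧ A.card = 3)).card =
      {C : Set α | IsCircuit M C ∧ C.ncard = 3}.ncard := by
    have himgeq : {C : Set α | IsCircuit M C ∧ C.ncard = 3} =
        (fun A : Finset α => (↑A : Set α)) ''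
          ↑(P.filter (fun A : Finset α => rk M ↑A = 2 ∧ A.card = 3)) := by
      ext C
      simp only [Set.mem_setOf_eq, Set.mem_image, Finset.mem_coe, Finset.mem_filter]
      constructor
      · rintro ⟨hC, h3⟩
        have hCE : C ⊆ M.E := hC.1.subset_ground
        have hCfin : C.Finite := Set.toFinite C
        refine ⟨hCfin.toFinset, ⟨?_, ?_, ?_⟩, hCfin.coe_toFinset⟩
        · rw [hPdef, Finset.mem_powerset, hE']
          intro x hx
          rw [Set.Finite.mem_toFinset] at hx ⊢
          exact hCE hx
        · rw [hCfin.coe_toFinset]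
          exact hs.rk_of_circuit hC h3
        · rw [← Set.ncard_eq_toFinset_card C hCfin]
          exact h3
      · rintro ⟨A, ⟨hAP, hrk2, hc3⟩, rfl⟩
        have h3 : (↑A : Set α).ncard = 3 := by rw [Set.ncard_coe_finset]; exact hc3
        exact ⟨hs.circuit_of (hmemP hAP) h3 hrk2, h3⟩
    rw [himgeq, Set.ncard_image_of_injOn (Finset.coe_injective.injOn),
      Set.ncard_coe_finset]
  have hS23 : ∑ A ∈ P.filter (fun A : Finset α => rk M ↑A = 2 ∧ A.card = 3), g A =
      -({C : Set α | IsCircuit M C ∧ C.ncard = 3}.ncard : ℤ) := by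
    have hterm : ∀ A ∈ P.filter (fun A : Finset α => rk M ↑A = 2 ∧ A.card = 3), g A = -1 := by
      intro A hA
      rw [Finset.mem_filter] at hA
      simp only [hgdef]
      simp [hA.2.1, hA.2.2]
    rw [Finset.sum_congr rfl hterm, Finset.sum_const, hf23card]
    simp
  -- assemble
  rw [hco, hsplit, hS0, hS1, hf2split, hS22, hS23]
  -- final arithmetic
  set m : ℕ := n - r with hm
  have hnm : n = r + m := by omega
  have e1 : ((n - r + 1).choose 2 : ℤ) = ((m.choose 2 : ℕ) : ℤ) + (m : ℤ) := by
    rw [← hm, choose_two_succ]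
    push_cast
    ring
  have e2 : ((n.choose 2 : ℕ) : ℤ) = ((r.choose 2 : ℕ) : ℤ) + ((m.choose 2 : ℕ) : ℤ) +
      (r : ℤ) * (m : ℤ) := by
    rw [hnm, choose_two_add]
    push_cast
    ring
  have e3 : 2 * ((r.choose 2 : ℕ) : ℤ) = (r : ℤ) * (r : ℤ) - (r : ℤ) := by
    have h := two_mul_choose_two r
    have h' : ((2 * r.choose 2 : ℕ) : ℤ) = ((r * (r - 1) : ℕ) : ℤ) := by exact_mod_cast h
    push_cast [Nat.cast_sub (show 1 ≤ r by omega)] at h'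
    rw [h']
    ring
  have hr1 : (((r - 1 : ℕ)) : ℤ) = (r : ℤ) - 1 := by
    push_cast [Nat.cast_sub (show 1 ≤ r by omega)]
    ring
  have hncast : (n : ℤ) = (r : ℤ) + (m : ℤ) := by exact_mod_cast hnm
  rw [hr1]
  linear_combination e2 - e1 + e3 - ((r : ℤ) - 1) * hncast

end

end SPPaper
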